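/- arXiv:2605.08287 — 3 statements merged into one kernel-verified Lean document; each statement's English description precedes it below -/
import Mathlib

section
/- Let X_1, …, X_n be independent random variables in [0,1] with means μ_i and variances σ_i², and let i* maximize μ_i with μ* = μ_{i*}, Δ_i = μ* − μ_i. Then E[max_i X_i] − μ* ≥ (1/(2n)) · Σ_{i : Δ_i > 0} max{σ_i² − Δ_i, 0}. -/
open MeasureTheory ProbabilityTheory

/-- Auxiliary: for a bounded variable `Y ∈ [0,1]` a.e. and `c ∈ [0,1]`,
`∫ (Y - c)₊ ≥ (Var Y - (c - E Y)) / 2`. -/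
lemma aux_posPart_ge {Ω : Type*} [MeasurableSpace Ω]
    (μ : Measure Ω) [IsProbabilityMeasure μ] (Y : Ω → ℝ) (hm : Measurable Y)
    (h01 : ∀ᵐ ω ∂μ, Y ω ∈ Set.Icc (0:ℝ) 1) (c : ℝ) (hc0 : 0 ≤ c) (hc1 : c ≤ 1) :
    (variance Y μ - (c - ∫ ω, Y ω ∂μ)) / 2 ≤ ∫ ω, max (Y ω - c) 0 ∂μ := by
  have hbd : ∀ᵐ ω ∂μ, ‖Y ω‖ ≤ 1 := by
    filter_upwards [h01] with ω h
    rw [Real.norm_eq_abs, abs_le]; exact ⟨le_trans (by norm_num) h.1, h.2⟩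
  have hintY : Integrable Y μ :=
    (integrable_const 1).mono' hm.aestronglyMeasurable hbd
  have hmemℒp : MemLp Y 2 μ := MemLp.of_bound hm.aestronglyMeasurable 1 hbd
  have hZbd : ∀ᵐ ω ∂μ, ‖Y ω - c‖ ≤ 1 := by
    filter_upwards [h01] with ω h
    rw [Real.norm_eq_abs, abs_le]
    constructor <;> nlinarith [h.1, h.2]
  have hintZ : Integrable (fun ω => Y ω - c) μ := hintY.sub (integrable_const c)
  have hintAbs : Integrable (fun ω => |Y ω - c|) μ := hintZ.abs
  have hintSq : Integrable (fun ω => (Y ω - c) ^ 2) μ := by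
    refine (integrable_const 1).mono' ((hm.sub measurable_const).pow_const 2).aestronglyMeasurable ?_
    filter_upwards [hZbd] with ω h
    rw [Real.norm_eq_abs, abs_pow]
    calc |Y ω - c| ^ 2 ≤ 1 ^ 2 := by
          exact pow_le_pow_left₀ (abs_nonneg _) (by rwa [Real.norm_eq_abs] at h) 2
      _ = 1 := one_pow 2
  -- ∫ max = (∫ Z + ∫ |Z|)/2
  have key : ∫ ω, max (Y ω - c) 0 ∂μ
      = ((∫ ω, (Y ω - c) ∂μ) + ∫ ω, |Y ω - c| ∂μ) / 2 := by
    rw [← integral_add hintZ hintAbs, ← integral_div]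
    congr 1; funext ω
    rcases le_total (Y ω - c) 0 with h | h
    · rw [max_eq_right h, abs_of_nonpos h]; ring
    · rw [max_eq_left h, abs_of_nonneg h]; ring
  -- ∫ |Z| ≥ ∫ Z²
  have habs_ge : ∫ ω, (Y ω - c) ^ 2 ∂μ ≤ ∫ ω, |Y ω - c| ∂μ := by
    refine integral_mono_ae hintSq hintAbs ?_
    filter_upwards [hZbd] with ω h
    rw [Real.norm_eq_abs] at h
    calc (Y ω - c) ^ 2 = |Y ω - c| * |Y ω - c| := by rw [← abs_mul, abs_of_nonneg (mul_self_nonneg _), sq]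
      _ ≤ 1 * |Y ω - c| := by exact mul_le_mul_of_nonneg_right h (abs_nonneg _)
      _ = |Y ω - c| := one_mul _
  -- ∫ Z² = Var Y + (∫Y - c)²
  have hsq_eq : ∫ ω, (Y ω - c) ^ 2 ∂μ = variance Y μ + ((∫ ω, Y ω ∂μ) - c) ^ 2 := by
    have hv := variance_eq_sub hmemℒp
    have hintY2 : Integrable (fun ω => Y ω ^ 2) μ := hmemℒp.integrable_sq
    have expand : ∀ ω, (Y ω - c) ^ 2 = Y ω ^ 2 - (2 * c) * Y ω + c ^ 2 := by
      intro ω; ring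
    rw [show (fun ω => (Y ω - c) ^ 2) = fun ω => Y ω ^ 2 - (2 * c) * Y ω + c ^ 2 from funext expand]
    have hint1 : Integrable (fun ω => Y ω ^ 2 - (2 * c) * Y ω) μ :=
      hintY2.sub (hintY.const_mul (2 * c))
    have hint2 : Integrable (fun ω => (2 * c) * Y ω) μ := hintY.const_mul (2 * c)
    rw [integral_add hint1 (integrable_const _),
      integral_sub hintY2 hint2, integral_const, integral_const_mul]
    simp only [measure_univ, ENNReal.toReal_one, smul_eq_mul, one_mul, probReal_univ, mul_one]
    have : μ[Y ^ 2] = ∫ ω, Y ω ^ 2 ∂μ := rfl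
    rw [hv, this]
    ring
  have hZint : ∫ ω, (Y ω - c) ∂μ = (∫ ω, Y ω ∂μ) - c := by
    rw [integral_sub hintY (integrable_const c), integral_const]
    simp
  rw [key, hZint]
  nlinarith [habs_ge, hsq_eq, sq_nonneg ((∫ ω, Y ω ∂μ) - c)]

theorem dynamic_static_gap_ge {Ω : Type*} [MeasurableSpace Ω]
    (μ : Measure Ω) [IsProbabilityMeasure μ] (n : ℕ)
    (X : Fin n → Ω → ℝ) (hmeas : ∀ i, Measurable (X i))
    (hindep : iIndepFun X μ)
    (hX01 : ∀ i, ∀ᵐ ω ∂μ, X i ω ∈ Set.Icc (0:ℝ) 1)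
    (istar : Fin n)
    (hstar : ∀ i, ∫ ω, X i ω ∂μ ≤ ∫ ω, X istar ω ∂μ) :
    (∫ ω, Finset.univ.sup' ⟨istar, Finset.mem_univ istar⟩ (fun i => X i ω) ∂μ)
        - ∫ ω, X istar ω ∂μ
      ≥ (1 / (2 * (n:ℝ))) *
        ∑ i ∈ Finset.univ.filter
            (fun i => 0 < (∫ ω, X istar ω ∂μ) - ∫ ω, X i ω ∂μ),
          max (variance (X i) μ - ((∫ ω, X istar ω ∂μ) - ∫ ω, X i ω ∂μ)) 0 := by
  classical
  set mstar := ∫ ω, X istar ω ∂μ with hmstar_def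
  set M : Ω → ℝ := fun ω => Finset.univ.sup' ⟨istar, Finset.mem_univ istar⟩ (fun i => X i ω)
    with hM_def
  have habs : ∀ i, ∀ᵐ ω ∂μ, ‖X i ω‖ ≤ 1 := fun i => by
    filter_upwards [hX01 i] with ω h
    rw [Real.norm_eq_abs, abs_le]; exact ⟨le_trans (by norm_num) h.1, h.2⟩
  have hint : ∀ i, Integrable (X i) μ := fun i =>
    (integrable_const 1).mono' (hmeas i).aestronglyMeasurable (habs i)
  have hmean0 : ∀ i, 0 ≤ ∫ ω, X i ω ∂μ := fun i =>
    integral_nonneg_of_ae ((hX01 i).mono fun ω h => h.1)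
  have hmean1 : ∀ i, ∫ ω, X i ω ∂μ ≤ 1 := fun i => by
    calc ∫ ω, X i ω ∂μ ≤ ∫ _ω, (1:ℝ) ∂μ :=
          integral_mono_ae (hint i) (integrable_const 1) ((hX01 i).mono fun ω h => h.2)
      _ = 1 := by simp
  have hMeq : M = Finset.univ.sup' ⟨istar, Finset.mem_univ istar⟩ X := by
    funext ω; exact (Finset.sup'_apply _ _ ω).symm
  have hMmeas : Measurable M := hMeq ▸ Finset.measurable_sup' _ (fun i _ => hmeas i)
  have hall : ∀ᵐ ω ∂μ, ∀ i, X i ω ∈ Set.Icc (0:ℝ) 1 := ae_all_iff.2 hX01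
  have hMbd : ∀ᵐ ω ∂μ, ‖M ω‖ ≤ 1 := by
    filter_upwards [hall] with ω h
    rw [Real.norm_eq_abs, abs_le]
    refine ⟨le_trans (by norm_num : (-1:ℝ) ≤ 0)
      ((h istar).1.trans (Finset.le_sup' (fun i => X i ω) (Finset.mem_univ istar))), ?_⟩
    exact Finset.sup'_le _ _ fun i _ => (h i).2
  have hMint : Integrable M μ := (integrable_const 1).mono' hMmeas.aestronglyMeasurable hMbd
  have hPint : ∀ i, Integrable (fun ω => max (X i ω - X istar ω) 0) μ := fun i => by
    refine (integrable_const 1).mono'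
      (((hmeas i).sub (hmeas istar)).max measurable_const).aestronglyMeasurable ?_
    filter_upwards [hall] with ω h
    rw [Real.norm_eq_abs, abs_le]
    refine ⟨by linarith [le_max_right (X i ω - X istar ω) (0:ℝ)], ?_⟩
    exact max_le (by linarith [(h i).2, (h istar).1]) (by norm_num)
  -- Step A
  have stepA : ∑ i : Fin n, ∫ ω, max (X i ω - X istar ω) 0 ∂μ
      ≤ (n:ℝ) * ((∫ ω, M ω ∂μ) - mstar) := by
    have hpt : (fun ω => ∑ i : Fin n, max (X i ω - X istar ω) 0)
        ≤ fun ω => (n:ℝ) * (M ω - X istar ω) := by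
      intro ω
      have hXM : ∀ j, X j ω ≤ M ω := fun j =>
        Finset.le_sup' (fun i => X i ω) (Finset.mem_univ j)
      have hle : ∀ i, max (X i ω - X istar ω) 0 ≤ M ω - X istar ω := fun i =>
        max_le (by linarith [hXM i]) (by linarith [hXM istar])
      calc ∑ i : Fin n, max (X i ω - X istar ω) 0
          ≤ ∑ _i : Fin n, (M ω - X istar ω) := Finset.sum_le_sum fun i _ => hle i
        _ = (n:ℝ) * (M ω - X istar ω) := by
            rw [Finset.sum_const, Finset.card_univ, Fintype.card_fin, nsmul_eq_mul]
    have hMS : Integrable (fun ω => M ω - X istar ω) μ := hMint.sub (hint istar)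
    have hR : Integrable (fun ω => (n:ℝ) * (M ω - X istar ω)) μ := hMS.const_mul _
    have h1 := integral_mono (integrable_finset_sum _ fun i _ => hPint i) hR hpt
    rw [integral_finset_sum _ (fun i _ => hPint i), integral_const_mul,
      integral_sub hMint (hint istar)] at h1
    exact h1
  -- Steps B and C combined, for each suboptimal arm
  have stepBC : ∀ i ∈ Finset.univ.filter (fun i => 0 < mstar - ∫ ω, X i ω ∂μ),
      max (variance (X i) μ - (mstar - ∫ ω, X i ω ∂μ)) 0
        ≤ 2 * ∫ ω, max (X i ω - X istar ω) 0 ∂μ := by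
    intro i hi
    rw [Finset.mem_filter] at hi
    have hΔ : 0 < mstar - ∫ ω, X i ω ∂μ := hi.2
    have hne : i ≠ istar := by
      intro h; rw [h, ← hmstar_def, sub_self] at hΔ; exact lt_irrefl _ hΔ
    have hQint : Integrable (fun ω => max (X i ω - mstar) 0) μ := by
      refine (integrable_const 1).mono'
        (((hmeas i).sub measurable_const).max measurable_const).aestronglyMeasurable ?_
      filter_upwards [hX01 i] with ω h
      rw [Real.norm_eq_abs, abs_le]
      refine ⟨by linarith [le_max_right (X i ω - mstar) (0:ℝ)], ?_⟩
      exact max_le (by linarith [h.2, hmean0 istar]) (by norm_num)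
    have hC := aux_posPart_ge μ (X i) (hmeas i) (hX01 i) mstar (hmean0 istar) (hmean1 istar)
    -- Step B via independence
    set f : ℝ → ℝ := fun a => if mstar < a then (1:ℝ) else 0 with hf_def
    have hfmeas : Measurable f :=
      Measurable.ite (measurableSet_lt measurable_const measurable_id)
        measurable_const measurable_const
    have hgmeas : Measurable (fun b : ℝ => b - mstar) := measurable_id.sub measurable_const
    have hIF : IndepFun (f ∘ X i) ((fun b : ℝ => b - mstar) ∘ X istar) μ :=
      (hindep.indepFun hne).comp hfmeas hgmeas
    have hfbd : ∀ a : ℝ, |f a| ≤ 1 := fun a => by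
      rw [hf_def]; dsimp only; split <;> norm_num
    have hintf : Integrable (f ∘ X i) μ := by
      refine (integrable_const 1).mono' ((hfmeas.comp (hmeas i)).aestronglyMeasurable) ?_
      exact Filter.Eventually.of_forall fun ω => by
        rw [Real.norm_eq_abs]; exact hfbd _
    have hintg : Integrable ((fun b : ℝ => b - mstar) ∘ X istar) μ :=
      (hint istar).sub (integrable_const _)
    have hprod : Integrable (fun ω => f (X i ω) * (X istar ω - mstar)) μ := by
      refine (integrable_const 1).mono'
        (((hfmeas.comp (hmeas i)).mul ((hmeas istar).sub measurable_const)).aestronglyMeasurable) ?_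
      filter_upwards [hX01 istar] with ω h
      rw [Real.norm_eq_abs, abs_mul]
      have h2 : |X istar ω - mstar| ≤ 1 := by
        rw [abs_le]; constructor <;> nlinarith [h.1, h.2, hmean0 istar, hmean1 istar]
      calc |f (X i ω)| * |X istar ω - mstar| ≤ 1 * 1 :=
            mul_le_mul (hfbd _) h2 (abs_nonneg _) zero_le_one
        _ = 1 := one_mul 1
    have hzero : ∫ ω, f (X i ω) * (X istar ω - mstar) ∂μ = 0 := by
      have h1 := IndepFun.integral_fun_mul_eq_mul_integral hIF hintf.aestronglyMeasurable hintg.aestronglyMeasurable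
      have hg0 : integral μ ((fun b : ℝ => b - mstar) ∘ X istar) = 0 := by
        have he : ((fun b : ℝ => b - mstar) ∘ X istar) = fun ω => X istar ω - mstar := rfl
        rw [he, integral_sub (hint istar) (integrable_const _), integral_const]
        simp [hmstar_def]
      calc ∫ ω, f (X i ω) * (X istar ω - mstar) ∂μ
          = integral μ (f ∘ X i) * integral μ ((fun b : ℝ => b - mstar) ∘ X istar) := h1
        _ = 0 := by rw [hg0, mul_zero]
    have hBpt : ∀ ω, max (X i ω - mstar) 0 - f (X i ω) * (X istar ω - mstar)
        ≤ max (X i ω - X istar ω) 0 := by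
      intro ω
      rw [hf_def]; dsimp only
      by_cases h : mstar < X i ω
      · rw [if_pos h, max_eq_left (le_of_lt (sub_pos.2 h)), one_mul]
        have he : X i ω - mstar - (X istar ω - mstar) = X i ω - X istar ω := by ring
        rw [he]; exact le_max_left _ _
      · rw [if_neg h, max_eq_right (by linarith [not_lt.1 h] : X i ω - mstar ≤ 0),
          zero_mul, sub_zero]
        exact le_max_right _ _
    have hB : ∫ ω, max (X i ω - mstar) 0 ∂μ ≤ ∫ ω, max (X i ω - X istar ω) 0 ∂μ := by
      have hsubint : Integrable
          (fun ω => max (X i ω - mstar) 0 - f (X i ω) * (X istar ω - mstar)) μ :=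
        hQint.sub hprod
      have h1 := integral_mono hsubint (hPint i) hBpt
      rw [integral_sub hQint hprod, hzero, sub_zero] at h1
      exact h1
    have hQ0 : 0 ≤ ∫ ω, max (X i ω - mstar) 0 ∂μ :=
      integral_nonneg fun ω => le_max_right _ _
    refine max_le (by linarith) (by linarith)
  -- Assemble
  rw [ge_iff_le]
  have hnpos : (0:ℝ) < n := by exact_mod_cast istar.pos
  have hsum1 := Finset.sum_le_sum stepBC
  have hsum2 : ∑ i ∈ Finset.univ.filter (fun i => 0 < mstar - ∫ ω, X i ω ∂μ),
      2 * ∫ ω, max (X i ω - X istar ω) 0 ∂μ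
      ≤ 2 * ∑ i : Fin n, ∫ ω, max (X i ω - X istar ω) 0 ∂μ := by
    rw [← Finset.mul_sum]
    refine mul_le_mul_of_nonneg_left ?_ (by norm_num)
    exact Finset.sum_le_sum_of_subset_of_nonneg (Finset.filter_subset _ _)
      fun j _ _ => integral_nonneg fun ω => le_max_right _ _
  have hchain : ∑ i ∈ Finset.univ.filter (fun i => 0 < mstar - ∫ ω, X i ω ∂μ),
      max (variance (X i) μ - (mstar - ∫ ω, X i ω ∂μ)) 0
      ≤ 2 * ((n:ℝ) * ((∫ ω, M ω ∂μ) - mstar)) := by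
    calc _ ≤ _ := hsum1
      _ ≤ _ := hsum2
      _ ≤ 2 * ((n:ℝ) * ((∫ ω, M ω ∂μ) - mstar)) :=
          mul_le_mul_of_nonneg_left stepA (by norm_num)
  calc (1 / (2 * (n:ℝ))) *
        ∑ i ∈ Finset.univ.filter (fun i => 0 < mstar - ∫ ω, X i ω ∂μ),
          max (variance (X i) μ - (mstar - ∫ ω, X i ω ∂μ)) 0
      ≤ (1 / (2 * (n:ℝ))) * (2 * ((n:ℝ) * ((∫ ω, M ω ∂μ) - mstar))) := by
        refine mul_le_mul_of_nonneg_left hchain ?_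
        positivity
    _ = (∫ ω, M ω ∂μ) - mstar := by
        field_simp
end

section
/- For any two probability measures P and Q on the same measurable space and any event E, P(E^c) + Q(E) ≥ (1/2)·exp(−KL(P ‖ Q)). -/
open MeasureTheory Classical

/-- The Kullback–Leibler divergence between `P` and `Q`, defined as the integral of the
log-likelihood ratio when `P ≪ Q` and the ratio is integrable, and `+∞` otherwise,
encoded as an `EReal`. -/

noncomputable def klDiv {Ω : Type*} [MeasurableSpace Ω] (P Q : Measure Ω) : EReal :=
  if P ≪ Q ∧ Integrable (llr P Q) P then ((∫ ω, llr P Q ω ∂P : ℝ) : EReal) else ⊤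

private lemma sqrt_exp' (x : ℝ) : Real.sqrt (Real.exp x) = Real.exp (x/2) := by
  rw [show Real.exp x = (Real.exp (x/2))^2 by rw [sq, ← Real.exp_add]; ring_nf]
  exact Real.sqrt_sq (Real.exp_pos _).le

-- Cauchy-Schwarz step in ENNReal
private lemma cs_step {Ω : Type*} [MeasurableSpace Ω]
    (P Q : Measure Ω) (s : Set Ω) (hs : MeasurableSet s) :
    ∫⁻ ω in s, (Q.rnDeriv P ω) ^ (1/2 : ℝ) ∂P ≤ (Q s) ^ (1/2 : ℝ) * (P s) ^ (1/2 : ℝ) := by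
  have hpq : Real.HolderConjugate 2 2 := Real.HolderConjugate.two_two
  have hg : AEMeasurable (fun ω => (Q.rnDeriv P ω) ^ (1/2 : ℝ)) (P.restrict s) :=
    ((Q.measurable_rnDeriv P).pow_const _).aemeasurable
  have h := ENNReal.lintegral_mul_le_Lp_mul_Lq (P.restrict s) hpq hg aemeasurable_const
      (g := fun _ => (1 : ENNReal))
  simp only [Pi.mul_apply, mul_one, ENNReal.one_rpow, lintegral_one,
    Measure.restrict_apply_univ] at h
  have h2 : ∀ ω, ((Q.rnDeriv P ω) ^ (1/2 : ℝ)) ^ (2 : ℝ) = Q.rnDeriv P ω := by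
    intro ω; rw [← ENNReal.rpow_mul]; norm_num
  simp only [h2] at h
  refine h.trans ?_
  gcongr
  exact (Measure.setLIntegral_rnDeriv_le s)

/-- Bretagnolle–Huber inequality: `P(Eᶜ) + Q(E) ≥ (1/2)·exp(−KL(P‖Q))`, with the convention
`exp(−∞) = 0`. -/
theorem bretagnolle_huber {Ω : Type*} [MeasurableSpace Ω]
    (P Q : Measure Ω) [IsProbabilityMeasure P] [IsProbabilityMeasure Q]
    (E : Set Ω) (hE : MeasurableSet E) :
    (P Eᶜ).toReal + (Q E).toReal
      ≥ (1/2) * (if klDiv P Q = ⊤ then 0 else Real.exp (-(klDiv P Q).toReal)) := by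
  by_cases h : klDiv P Q = ⊤
  · simp only [h, if_pos]
    simp only [mul_zero, ge_iff_le, if_true]
    positivity
  · rw [if_neg h]
    have hc : P ≪ Q ∧ Integrable (llr P Q) P := by
      by_contra hc
      exact h (by simp [klDiv, hc])
    obtain ⟨hac, hint⟩ := hc
    have hKL : (klDiv P Q).toReal = ∫ ω, llr P Q ω ∂P := by
      rw [klDiv, if_pos ⟨hac, hint⟩]; exact EReal.toReal_coe _
    set KL := ∫ ω, llr P Q ω ∂P with hKLdef
    set g := Q.rnDeriv P with hgdef
    -- a.e. equality : exp (-llr/2) = sqrt (g.toReal)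
    have hae : (fun ω => Real.exp (- llr P Q ω / 2)) =ᵐ[P]
        (fun ω => Real.sqrt ((g ω).toReal)) := by
      filter_upwards [exp_neg_llr hac] with ω hω
      rw [← hω, sqrt_exp', neg_div]
    -- integrability of sqrt (g.toReal) w.r.t. P
    have hmeas : AEStronglyMeasurable (fun ω => Real.sqrt ((g ω).toReal)) P :=
      ((Q.measurable_rnDeriv P).ennreal_toReal.sqrt).aestronglyMeasurable
    have sq_int : Integrable (fun ω => Real.sqrt ((g ω).toReal)) P := by
      refine Integrable.mono ((integrable_const (1:ℝ)).add
        (Measure.integrable_toReal_rnDeriv (μ := Q) (ν := P))) hmeas ?_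
      filter_upwards with ω
      have h0 : (0:ℝ) ≤ (g ω).toReal := ENNReal.toReal_nonneg
      have hsq := Real.sq_sqrt h0
      have hnn := Real.sqrt_nonneg ((g ω).toReal)
      rw [Real.norm_eq_abs, Real.norm_eq_abs, abs_of_nonneg hnn]
      have : Real.sqrt ((g ω).toReal) ≤ 1 + (g ω).toReal := by
        nlinarith [sq_nonneg (Real.sqrt ((g ω).toReal) - 1)]
      exact this.trans (le_abs_self _)
    -- Jensen
    have hjensen : Real.exp (∫ ω, (- llr P Q ω / 2) ∂P)
        ≤ ∫ ω, Real.exp (- llr P Q ω / 2) ∂P := by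
      refine convexOn_exp.map_integral_le (Real.continuous_exp).continuousOn
        isClosed_univ ?_ (hint.neg.div_const 2) ?_
      · filter_upwards with ω using Set.mem_univ _
      · exact (sq_int.congr hae.symm : _)
    have hint_eq : ∫ ω, (- llr P Q ω / 2) ∂P = - KL / 2 := by
      rw [integral_div, integral_neg]
    have hcongr : ∫ ω, Real.exp (- llr P Q ω / 2) ∂P
        = ∫ ω, Real.sqrt ((g ω).toReal) ∂P := integral_congr_ae hae
    -- lintegral bridge
    have hlin : ∫ ω, Real.sqrt ((g ω).toReal) ∂P
        = (∫⁻ ω, g ω ^ (1/2 : ℝ) ∂P).toReal := by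
      rw [integral_eq_lintegral_of_nonneg_ae
        (Filter.Eventually.of_forall fun ω => Real.sqrt_nonneg _) hmeas]
      congr 1
      refine lintegral_congr_ae ?_
      filter_upwards [Measure.rnDeriv_lt_top Q P] with ω hω
      rw [Real.sqrt_eq_rpow, ← ENNReal.ofReal_rpow_of_nonneg ENNReal.toReal_nonneg
        (by norm_num), ENNReal.ofReal_toReal hω.ne]
    -- split and Cauchy-Schwarz
    set T := ∫⁻ ω, g ω ^ (1/2 : ℝ) ∂P with hT
    set R := (Q E) ^ (1/2 : ℝ) * (P E) ^ (1/2 : ℝ)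
      + (Q Eᶜ) ^ (1/2 : ℝ) * (P Eᶜ) ^ (1/2 : ℝ) with hR
    have hTR : T ≤ R := by
      rw [hT, ← lintegral_add_compl (fun ω => g ω ^ (1/2 : ℝ)) hE]
      exact add_le_add (cs_step P Q E hE) (cs_step P Q Eᶜ hE.compl)
    have hfin : ∀ s : Set Ω, (Q s) ^ (1/2 : ℝ) * (P s) ^ (1/2 : ℝ) ≠ ⊤ := by
      intro s
      exact ENNReal.mul_ne_top
        (ENNReal.rpow_ne_top_of_nonneg (by norm_num) (measure_ne_top Q s))
        (ENNReal.rpow_ne_top_of_nonneg (by norm_num) (measure_ne_top P s))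
    have hRfin : R ≠ ⊤ := by
      rw [hR]; exact ENNReal.add_ne_top.mpr ⟨hfin E, hfin Eᶜ⟩
    have hTReal : T.toReal ≤ R.toReal := ENNReal.toReal_mono hRfin hTR
    have hRReal : R.toReal = Real.sqrt ((Q E).toReal * (P E).toReal)
        + Real.sqrt ((Q Eᶜ).toReal * (P Eᶜ).toReal) := by
      rw [hR, ENNReal.toReal_add (hfin E) (hfin Eᶜ), ENNReal.toReal_mul, ENNReal.toReal_mul,
        ← ENNReal.toReal_rpow, ← ENNReal.toReal_rpow, ← ENNReal.toReal_rpow,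
        ← ENNReal.toReal_rpow, Real.sqrt_eq_rpow, Real.sqrt_eq_rpow,
        Real.mul_rpow ENNReal.toReal_nonneg ENNReal.toReal_nonneg,
        Real.mul_rpow ENNReal.toReal_nonneg ENNReal.toReal_nonneg]
    -- assemble
    set u := Real.exp (- KL / 2) with hu
    have hchain : u ≤ Real.sqrt ((Q E).toReal * (P E).toReal)
        + Real.sqrt ((Q Eᶜ).toReal * (P Eᶜ).toReal) := by
      rw [hu, ← hint_eq, ← hRReal]
      exact hjensen.trans (le_of_eq_of_le (hcongr.trans hlin) hTReal)
    have hexpKL : Real.exp (-(klDiv P Q).toReal) = u * u := by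
      rw [hKL, hu, ← Real.exp_add]; ring_nf
    rw [hexpKL]
    have ha1 : (P E).toReal ≤ 1 := by
      simpa using ENNReal.toReal_mono (by simp) (prob_le_one (μ := P) (s := E))
    have hb1 : (Q Eᶜ).toReal ≤ 1 := by
      simpa using ENNReal.toReal_mono (by simp) (prob_le_one (μ := Q) (s := Eᶜ))
    have hA : (0:ℝ) ≤ (P Eᶜ).toReal := ENNReal.toReal_nonneg
    have hB : (0:ℝ) ≤ (Q E).toReal := ENNReal.toReal_nonneg
    have ha0 : (0:ℝ) ≤ (P E).toReal := ENNReal.toReal_nonneg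
    have hb0 : (0:ℝ) ≤ (Q Eᶜ).toReal := ENNReal.toReal_nonneg
    have hu0 : 0 ≤ u := Real.exp_nonneg _
    have s1 := Real.sq_sqrt (mul_nonneg hB ha0)
    have s2 := Real.sq_sqrt (mul_nonneg hb0 hA)
    have n1 := Real.sqrt_nonneg ((Q E).toReal * (P E).toReal)
    have n2 := Real.sqrt_nonneg ((Q Eᶜ).toReal * (P Eᶜ).toReal)
    nlinarith [sq_nonneg (Real.sqrt ((Q E).toReal * (P E).toReal)
      - Real.sqrt ((Q Eᶜ).toReal * (P Eᶜ).toReal)), sq_nonneg u,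
      mul_le_mul_of_nonneg_left ha1 hB, mul_le_mul_of_nonneg_left hb1 hA]
end

section
/- Let 0 < ε < p ≤ 1/4 with p − ε = 2Δ for some Δ > 0. Then KL(Be(p) ‖ Be(ε)) ≤ 8Δ²/ε, where Be(q) denotes the Bernoulli distribution with parameter q and KL(Be(p)‖Be(q)) = p·log(p/q) + (1−p)·log((1−p)/(1−q)). -/
theorem bernoulli_kl_bound (p ε Δ : ℝ) (hε : 0 < ε) (hεp : ε < p) (hp : p ≤ 1/4)
    (hΔ : 0 < Δ) (hgap : p - ε = 2 * Δ) :
    p * Real.log (p / ε) + (1 - p) * Real.log ((1 - p) / (1 - ε))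
      ≤ 8 * Δ^2 / ε := by
  have hp0 : 0 < p := hε.trans hεp
  have hp1 : p < 1 := by linarith
  have hε1 : ε < 1 := by linarith
  have h1 : Real.log (p / ε) ≤ p / ε - 1 :=
    Real.log_le_sub_one_of_pos (by positivity)
  have h2 : Real.log ((1 - p) / (1 - ε)) ≤ (1 - p) / (1 - ε) - 1 :=
    Real.log_le_sub_one_of_pos (by
      apply div_pos <;> linarith)
  have key : p * (p / ε - 1) + (1 - p) * ((1 - p) / (1 - ε) - 1) ≤ 8 * Δ^2 / ε := by
    have h1ε : 0 < 1 - ε := by linarith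
    rw [div_sub' hε.ne', div_sub' h1ε.ne']
    rw [mul_div_assoc', mul_div_assoc', div_add_div _ _ hε.ne' h1ε.ne',
      div_le_div_iff₀ (mul_pos hε h1ε) hε]
    rw [show (8:ℝ) * Δ^2 = 2 * (p - ε)^2 by rw [hgap]; ring]
    nlinarith [mul_nonneg (mul_nonneg (sq_nonneg (p - ε)) hε.le)
      (by linarith : (0:ℝ) ≤ 1 - 2*ε)]
  calc p * Real.log (p / ε) + (1 - p) * Real.log ((1 - p) / (1 - ε))
      ≤ p * (p / ε - 1) + (1 - p) * ((1 - p) / (1 - ε) - 1) := by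
        gcongr <;> linarith
    _ ≤ 8 * Δ^2 / ε := key
end
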